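/- Let γ ∈ (0,α). Assume: (i) condition (C1) with exponent γ: there is c0 > 0 such that G(A_s(Q), z0) ≥ c0·(s/r)^γ·G(A_r(Q), z0) for all Q ∈ ∂D, r ∈ (0,R) and s ∈ (0,r); (ii) the Carleson estimate: there is c > 1 such that G(x,y) ≤ c·G(A_r(Q), y) whenever Q ∈ ∂D, r ∈ (0, κR/4), y ∈ D \ closure(B(Q,4r)) and x ∈ D ∩ B(Q,r); (iii) the comparability of g on 𝓑: there is c ≥ 1 such that g(A1) ≤ c·g(A2) for all x, y ∈ D and A1, A2 ∈ 𝓑(x,y); (iv) the boundary decay lower bound: there is c > 0 such that min(g(A_{r(x,y)}(Q_x)), g(A_{r(x,y)}(Q_y))) ≥ c·r(x,y)^γ for all x, y ∈ D with r(x,y) < ε1. Then there exists a constant c > 0 such that for all x, y, z ∈ D and all A_{x,y} ∈ 𝓑(x,y), A_{y,z} ∈ 𝓑(y,z): g(A_{y,z}) ≤ c·max((r(y,z)/r(x,y))^γ, 1)·g(A_{x,y}). -/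

import Mathlib

open Metric Set MeasureTheory

/-- Distance to the boundary of `D`. -/
noncomputable def rho {d : ℕ} (D : Set (EuclideanSpace ℝ (Fin d)))
    (x : EuclideanSpace ℝ (Fin d)) : ℝ :=
  Metric.infDist x (frontier D)

/-- `r(x,y) := max(ρ_D(x), ρ_D(y), |x-y|)`. -/
noncomputable def rxy {d : ℕ} (D : Set (EuclideanSpace ℝ (Fin d)))
    (x y : EuclideanSpace ℝ (Fin d)) : ℝ :=
  max (max (rho D x) (rho D y)) (dist x y)

/-- The set `𝓑(x,y)`. -/
noncomputable def BB {d : ℕ} (D : Set (EuclideanSpace ℝ (Fin d))) (M ε1 : ℝ)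
    (z0 x y : EuclideanSpace ℝ (Fin d)) : Set (EuclideanSpace ℝ (Fin d)) :=
  if rxy D x y < ε1 then
    {A | A ∈ D ∧ rxy D x y / M < rho D A ∧ max (dist x A) (dist y A) < 5 * rxy D x y}
  else {z0}

open Classical in
/-- `g(x) := min(G(x,z0), C1)`, with the convention `g(z0) = C1` (since `G(z0,z0) = ∞`). -/
noncomputable def gfun {d : ℕ} (G : EuclideanSpace ℝ (Fin d) → EuclideanSpace ℝ (Fin d) → ℝ)
    (z0 : EuclideanSpace ℝ (Fin d)) (C1 : ℝ) (x : EuclideanSpace ℝ (Fin d)) : ℝ :=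
  if x = z0 then C1 else min (G x z0) C1

set_option maxHeartbeats 2000000 in
theorem stmt10
    {d : ℕ} (hd : 2 ≤ d)
    {D : Set (EuclideanSpace ℝ (Fin d))} (hDopen : IsOpen D) (hDbdd : Bornology.IsBounded D)
    {κ R : ℝ} (hκ0 : 0 < κ) (hκ2 : κ ≤ 1 / 2) (hR : 0 < R)
    {A : EuclideanSpace ℝ (Fin d) → ℝ → EuclideanSpace ℝ (Fin d)}
    (hfat : ∀ Q ∈ frontier D, ∀ r : ℝ, 0 < r → r < R →
      A Q r ∈ D ∧ ball (A Q r) (κ * r) ⊆ D ∩ ball Q r)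
    {M ε1 : ℝ} (hM : M = 2 / κ) (hε1 : ε1 = R / (12 * M))
    {z0 : EuclideanSpace ℝ (Fin d)} (hz0D : z0 ∈ D)
    (hz0l : 2 * R / M < rho D z0) (hz0u : rho D z0 < R)
    {α : ℝ} (hα0 : 0 < α) (hα2 : α < 2) (hαd : α < d)
    {G : EuclideanSpace ℝ (Fin d) → EuclideanSpace ℝ (Fin d) → ℝ}
    (hGsymm : ∀ x y, G x y = G y x)
    (hGpos : ∀ x ∈ D, ∀ y ∈ D, x ≠ y → 0 < G x y)
    {C0 : ℝ} (hC0 : 1 ≤ C0)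
    (hGup : ∀ x ∈ D, ∀ y ∈ D, x ≠ y → G x y ≤ C0 * dist x y ^ (α - d))
    (hGlow : ∀ x ∈ D, ∀ y ∈ D, x ≠ y → dist x y ≤ rho D y / 2 →
      C0⁻¹ * dist x y ^ (α - d) ≤ G x y)
    {C1 : ℝ} (hC1 : C1 = C0 * (2 : ℝ) ^ ((d : ℝ) - α) * rho D z0 ^ (α - d))
    {Qb : EuclideanSpace ℝ (Fin d) → EuclideanSpace ℝ (Fin d)}
    (hQb : ∀ x ∈ D, Qb x ∈ frontier D ∧ dist x (Qb x) = rho D x)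
    {γ : ℝ} (hγ0 : 0 < γ) (hγα : γ < α)
    (hC1cond : ∃ c0 > 0, ∀ Q ∈ frontier D, ∀ r : ℝ, 0 < r → r < R → ∀ s : ℝ, 0 < s → s < r →
      c0 * (s / r) ^ γ * G (A Q r) z0 ≤ G (A Q s) z0)
    (hCarl : ∃ c > 1, ∀ Q ∈ frontier D, ∀ r : ℝ, 0 < r → r < κ * R / 4 →
      ∀ y ∈ D \ closure (ball Q (4 * r)), ∀ x ∈ D ∩ ball Q r, G x y ≤ c * G (A Q r) y)
    (hcomp : ∃ c ≥ 1, ∀ x ∈ D, ∀ y ∈ D, ∀ A1 ∈ BB D M ε1 z0 x y, ∀ A2 ∈ BB D M ε1 z0 x y,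
      gfun G z0 C1 A1 ≤ c * gfun G z0 C1 A2)
    (hbdlow : ∃ c > 0, ∀ x ∈ D, ∀ y ∈ D, rxy D x y < ε1 →
      c * rxy D x y ^ γ ≤
        min (gfun G z0 C1 (A (Qb x) (rxy D x y))) (gfun G z0 C1 (A (Qb y) (rxy D x y))))
 :
    ∃ c > 0, ∀ x ∈ D, ∀ y ∈ D, ∀ z ∈ D, ∀ Axy ∈ BB D M ε1 z0 x y, ∀ Ayz ∈ BB D M ε1 z0 y z,
      gfun G z0 C1 Ayz ≤ c * max ((rxy D y z / rxy D x y) ^ γ) 1 * gfun G z0 C1 Axy := by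
  classical
  obtain ⟨c0, hc0, hc1c⟩ := hC1cond
  obtain ⟨ccar, hccar, hcar⟩ := hCarl
  obtain ⟨ccm, hccm, hcm⟩ := hcomp
  obtain ⟨clw, hclw, hlow⟩ := hbdlow
  have hccm0 : (0:ℝ) < ccm := lt_of_lt_of_le one_pos hccm
  have hccar0 : (0:ℝ) < ccar := lt_trans one_pos hccar
  have hM0 : 0 < M := by rw [hM]; positivity
  have hε1pos : 0 < ε1 := by rw [hε1]; positivity
  have hε1val : ε1 = κ * R / 24 := by rw [hε1, hM]; field_simp; ring
  have hε1R : ε1 < R := by rw [hε1val]; nlinarith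
  have hz0l' : κ * R < rho D z0 := by
    have heq : 2 * R / M = κ * R := by rw [hM]; field_simp
    rw [heq] at hz0l; exact hz0l
  have hρz0 : 0 < rho D z0 := lt_trans (mul_pos hκ0 hR) hz0l'
  have hfr : (frontier D).Nonempty := ⟨Qb z0, (hQb z0 hz0D).1⟩
  have hrho_pos : ∀ x ∈ D, 0 < rho D x := by
    intro x hx
    have hxnf : x ∉ frontier D := by
      rw [hDopen.frontier_eq]; exact fun h => h.2 hx
    have := (IsClosed.notMem_iff_infDist_pos isClosed_frontier hfr).1 hxnf
    unfold rho; exact this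
  have hrho_le : ∀ (w : EuclideanSpace ℝ (Fin d)), ∀ Q ∈ frontier D, rho D w ≤ dist w Q := by
    intro w Q hQ; unfold rho; exact Metric.infDist_le_dist_of_mem hQ
  have hAgood : ∀ Q ∈ frontier D, ∀ t : ℝ, 0 < t → t < R →
      A Q t ∈ D ∧ dist (A Q t) Q < t ∧ κ * t ≤ rho D (A Q t) ∧ rho D (A Q t) < t := by
    intro Q hQ t ht htR
    obtain ⟨hAD, hball⟩ := hfat Q hQ t ht htR
    have hAQ : dist (A Q t) Q < t := by
      have h1 : A Q t ∈ ball Q t := (hball (mem_ball_self (mul_pos hκ0 ht))).2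
      rwa [mem_ball] at h1
    have hk : κ * t ≤ rho D (A Q t) := by
      by_contra h
      push_neg at h
      unfold rho at h
      obtain ⟨w, hw, hdw⟩ := (Metric.infDist_lt_iff hfr).1 h
      have hwD : w ∈ D := (hball (by rwa [mem_ball, dist_comm])).1
      rw [hDopen.frontier_eq] at hw
      exact hw.2 hwD
    exact ⟨hAD, hAQ, hk, lt_of_le_of_lt (hrho_le _ Q hQ) hAQ⟩
  have hC00 : (0:ℝ) < C0 := lt_of_lt_of_le one_pos hC0
  have hC1pos : 0 < C1 := by
    rw [hC1]
    exact mul_pos (mul_pos hC00 (Real.rpow_pos_of_pos two_pos _)) (Real.rpow_pos_of_pos hρz0 _)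
  have hgle : ∀ w, gfun G z0 C1 w ≤ C1 := by
    intro w; unfold gfun; split_ifs
    · exact le_refl _
    · exact min_le_right _ _
  have hgpos : ∀ w ∈ D, 0 < gfun G z0 C1 w := by
    intro w hw; unfold gfun; split_ifs with h
    · exact hC1pos
    · exact lt_min (hGpos w hw z0 hz0D h) hC1pos
  have hε1half : ε1 < rho D z0 / 2 := by
    rw [hε1val]; linarith [mul_pos hκ0 hR]
  have hgnear : ∀ w ∈ D, rho D w < ε1 → w ≠ z0 ∧ gfun G z0 C1 w = G w z0 := by
    intro w hw hrw
    have hlip : rho D z0 ≤ rho D w + dist z0 w := by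
      unfold rho; exact Metric.infDist_le_infDist_add_dist
    have hdist : rho D z0 / 2 ≤ dist w z0 := by
      rw [dist_comm]; linarith
    have hwz : w ≠ z0 := by
      refine dist_pos.1 (lt_of_lt_of_le ?_ hdist)
      linarith
    have h2 : dist w z0 ^ (α - (d:ℝ)) ≤ (rho D z0 / 2) ^ (α - (d:ℝ)) :=
      Real.rpow_le_rpow_of_nonpos (half_pos hρz0) hdist (by linarith)
    have h3 : (rho D z0 / 2) ^ (α - (d:ℝ)) = 2 ^ ((d:ℝ) - α) * rho D z0 ^ (α - (d:ℝ)) := by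
      rw [Real.div_rpow hρz0.le (by norm_num : (0:ℝ) ≤ 2), div_eq_mul_inv,
        ← Real.rpow_neg (by norm_num : (0:ℝ) ≤ 2), neg_sub, mul_comm]
    have hGle : G w z0 ≤ C1 := by
      calc G w z0 ≤ C0 * dist w z0 ^ (α - (d:ℝ)) := hGup w hw z0 hz0D hwz
        _ ≤ C0 * (rho D z0 / 2) ^ (α - (d:ℝ)) := mul_le_mul_of_nonneg_left h2 hC00.le
        _ = C1 := by rw [h3, hC1]; ring
    refine ⟨hwz, ?_⟩
    unfold gfun
    rw [if_neg hwz, min_eq_left hGle]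
  have hrxy_comm : ∀ u v, rxy D u v = rxy D v u := by
    intro u v; unfold rxy; rw [max_comm (rho D u), dist_comm]
  have hrho_le_rxy : ∀ u v, rho D u ≤ rxy D u v := by
    intro u v; unfold rxy; exact le_trans (le_max_left _ _) (le_max_left _ _)
  have hdist_le_rxy : ∀ u v, dist u v ≤ rxy D u v := by
    intro u v; unfold rxy; exact le_max_right _ _
  have hrxy_pos : ∀ u ∈ D, ∀ (v : EuclideanSpace ℝ (Fin d)), 0 < rxy D u v := by
    intro u hu v; exact lt_of_lt_of_le (hrho_pos u hu) (hrho_le_rxy u v)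
  have hmemBB : ∀ u ∈ D, ∀ (v : EuclideanSpace ℝ (Fin d)), ∀ t : ℝ, t = rxy D u v → t < ε1 →
      (A (Qb u) t ∈ D ∧ dist (A (Qb u) t) (Qb u) < t ∧ rho D (A (Qb u) t) < t) ∧
      A (Qb u) t ∈ BB D M ε1 z0 u v ∧ A (Qb u) t ∈ BB D M ε1 z0 v u := by
    intro u hu v t htdef htε
    obtain ⟨hQf, hQd⟩ := hQb u hu
    have ht0 : 0 < t := htdef ▸ hrxy_pos u hu v
    obtain ⟨hAD, hAQ, hk, hrlt⟩ := hAgood (Qb u) hQf t ht0 (htε.trans hε1R)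
    have hrhoA : t / M < rho D (A (Qb u) t) := by
      refine lt_of_lt_of_le ?_ hk
      rw [hM]
      rw [div_lt_iff₀ (by positivity : (0:ℝ) < 2 / κ)]
      have : κ * t * (2 / κ) = 2 * t := by field_simp
      rw [this]; linarith
    have hdu : dist u (A (Qb u) t) < 2 * t := by
      calc dist u (A (Qb u) t) ≤ dist u (Qb u) + dist (Qb u) (A (Qb u) t) := dist_triangle _ _ _
        _ < t + t := by
            rw [hQd, dist_comm]
            exact add_lt_add_of_le_of_lt (htdef ▸ hrho_le_rxy u v) hAQ
        _ = 2 * t := by ring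
    have hdv : dist v (A (Qb u) t) < 3 * t := by
      calc dist v (A (Qb u) t) ≤ dist v u + dist u (A (Qb u) t) := dist_triangle _ _ _
        _ < t + 2 * t := add_lt_add_of_le_of_lt
            (by rw [dist_comm]; exact htdef ▸ hdist_le_rxy u v) hdu
        _ = 3 * t := by ring
    have htvu : t = rxy D v u := htdef.trans (hrxy_comm u v)
    refine ⟨⟨hAD, hAQ, hrlt⟩, ?_, ?_⟩
    · unfold BB
      rw [if_pos (htdef ▸ htε)]
      simp only [Set.mem_setOf_eq]
      rw [← htdef]
      exact ⟨hAD, hrhoA, max_lt (by linarith) (by linarith)⟩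
    · unfold BB
      rw [if_pos (htvu ▸ htε)]
      simp only [Set.mem_setOf_eq]
      rw [← htvu]
      exact ⟨hAD, hrhoA, max_lt (by linarith) (by linarith)⟩
  have hBBD : ∀ u v w, w ∈ BB D M ε1 z0 u v → w ∈ D := by
    intro u v w hw
    unfold BB at hw
    split_ifs at hw
    · exact hw.1
    · rw [mem_singleton_iff] at hw; rw [hw]; exact hz0D
  -- the constant
  have hε1γ : 0 < ε1 ^ γ := Real.rpow_pos_of_pos hε1pos γ
  have hterm3 : 0 < C1 * ccm / (clw * ε1 ^ γ) :=
    div_pos (mul_pos hC1pos hccm0) (mul_pos hclw hε1γ)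
  have hterm2a : (0:ℝ) ≤ ccm ^ 2 * ccar := mul_nonneg (sq_nonneg _) hccar0.le
  have hterm2b : (0:ℝ) ≤ ccm ^ 2 * c0⁻¹ := mul_nonneg (sq_nonneg _) (inv_nonneg.2 hc0.le)
  refine ⟨1 + ccm ^ 2 * ccar + ccm ^ 2 * c0⁻¹ + C1 * ccm / (clw * ε1 ^ γ), by linarith, ?_⟩
  set c := 1 + ccm ^ 2 * ccar + ccm ^ 2 * c0⁻¹ + C1 * ccm / (clw * ε1 ^ γ) with hcdef
  have hcpos : 0 < c := by rw [hcdef]; linarith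
  have hc1le : 1 ≤ c := by rw [hcdef]; linarith
  have hcA : ccm ^ 2 * ccar ≤ c := by rw [hcdef]; linarith
  have hcB : ccm ^ 2 * c0⁻¹ ≤ c := by rw [hcdef]; linarith
  have hcC : C1 * ccm / (clw * ε1 ^ γ) ≤ c := by rw [hcdef]; linarith
  intro x hx y hy z hz Axy hAxy Ayz hAyz
  set a := rxy D x y with ha
  set b := rxy D y z with hb
  have ha0 : 0 < a := ha ▸ hrxy_pos x hx y
  have hb0 : 0 < b := hb ▸ hrxy_pos y hy z
  set mx := max ((b / a) ^ γ) 1 with hmx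
  have hmx1 : (1:ℝ) ≤ mx := le_max_right _ _
  have hmxge : (b / a) ^ γ ≤ mx := le_max_left _ _
  have hmx0 : (0:ℝ) ≤ mx := le_trans zero_le_one hmx1
  have hgX : 0 < gfun G z0 C1 Axy := hgpos Axy (hBBD x y Axy hAxy)
  by_cases haε : a < ε1
  · -- main case : a < ε1
    have hQf : Qb y ∈ frontier D := (hQb y hy).1
    obtain ⟨⟨hA1D, hA1Q, hA1r⟩, _, hA1xy⟩ :=
      hmemBB y hy x a (ha.trans (hrxy_comm x y)) haε
    have hlow1 : clw * a ^ γ ≤ gfun G z0 C1 (A (Qb y) a) := by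
      have h := (hlow x hx y hy (ha ▸ haε)).trans (min_le_right _ _)
      rw [← ha] at h
      exact h
    have hcm1 : gfun G z0 C1 (A (Qb y) a) ≤ ccm * gfun G z0 C1 Axy :=
      hcm x hx y hy (A (Qb y) a) hA1xy Axy hAxy
    have hlowX : clw * a ^ γ ≤ ccm * gfun G z0 C1 Axy := le_trans hlow1 hcm1
    obtain ⟨hA1ne, hg1⟩ := hgnear (A (Qb y) a) hA1D (lt_trans hA1r haε)
    by_cases hbε : b < ε1
    · -- both small
      obtain ⟨⟨hA2D, hA2Q, hA2r⟩, hA2yz, _⟩ := hmemBB y hy z b hb hbε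
      have hcm2 : gfun G z0 C1 Ayz ≤ ccm * gfun G z0 C1 (A (Qb y) b) :=
        hcm y hy z hz Ayz hAyz (A (Qb y) b) hA2yz
      obtain ⟨hA2ne, hg2⟩ := hgnear (A (Qb y) b) hA2D (lt_trans hA2r hbε)
      have hG1pos : 0 < G (A (Qb y) a) z0 := hGpos _ hA1D z0 hz0D hA1ne
      rcases le_or_gt b a with hba | hab
      · -- b ≤ a : Carleson
        have haκ : a < κ * R / 4 := by
          rw [hε1val] at haε
          linarith [mul_pos hκ0 hR]
        have hz0far : z0 ∈ D \ closure (ball (Qb y) (4 * a)) := by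
          refine ⟨hz0D, fun hmem => ?_⟩
          have h1 : dist z0 (Qb y) ≤ 4 * a := by
            have h2 := closure_ball_subset_closedBall hmem
            rwa [mem_closedBall] at h2
          have h2 : rho D z0 ≤ dist z0 (Qb y) := hrho_le z0 (Qb y) hQf
          rw [hε1val] at haε
          linarith [mul_pos hκ0 hR]
        have hcarl : G (A (Qb y) b) z0 ≤ ccar * G (A (Qb y) a) z0 :=
          hcar (Qb y) hQf a ha0 haκ z0 hz0far (A (Qb y) b)
            ⟨hA2D, mem_ball.2 (lt_of_lt_of_le hA2Q hba)⟩
        calc gfun G z0 C1 Ayz ≤ ccm * gfun G z0 C1 (A (Qb y) b) := hcm2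
          _ = ccm * G (A (Qb y) b) z0 := by rw [hg2]
          _ ≤ ccm * (ccar * G (A (Qb y) a) z0) := mul_le_mul_of_nonneg_left hcarl hccm0.le
          _ = ccm * ccar * gfun G z0 C1 (A (Qb y) a) := by rw [hg1]; ring
          _ ≤ ccm * ccar * (ccm * gfun G z0 C1 Axy) :=
              mul_le_mul_of_nonneg_left hcm1 (mul_nonneg hccm0.le hccar0.le)
          _ = ccm ^ 2 * ccar * gfun G z0 C1 Axy := by ring
          _ ≤ c * mx * gfun G z0 C1 Axy := by
              refine mul_le_mul_of_nonneg_right ?_ hgX.le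
              have h0 : c * 1 ≤ c * mx := mul_le_mul_of_nonneg_left hmx1 hcpos.le
              rw [mul_one] at h0
              linarith
      · -- a < b : condition (C1)
        have hkey := hc1c (Qb y) hQf b hb0 (hbε.trans hε1R) a ha0 hab
        have hp : (0:ℝ) < (a / b) ^ γ := Real.rpow_pos_of_pos (div_pos ha0 hb0) γ
        have hbr : (0:ℝ) < (b / a) ^ γ := Real.rpow_pos_of_pos (div_pos hb0 ha0) γ
        have hq : (b / a) ^ γ = ((a / b) ^ γ)⁻¹ := by
          rw [← Real.inv_rpow (div_pos ha0 hb0).le, inv_div]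
        have hG2le : G (A (Qb y) b) z0 ≤ c0⁻¹ * (b / a) ^ γ * G (A (Qb y) a) z0 := by
          rw [hq]
          have h2 := mul_le_mul_of_nonneg_left hkey
            (mul_nonneg (inv_nonneg.2 hc0.le) (inv_nonneg.2 hp.le))
          calc G (A (Qb y) b) z0
              = c0⁻¹ * ((a / b) ^ γ)⁻¹ * (c0 * (a / b) ^ γ * G (A (Qb y) b) z0) := by
                field_simp
            _ ≤ c0⁻¹ * ((a / b) ^ γ)⁻¹ * G (A (Qb y) a) z0 := h2
        have hnn : (0:ℝ) ≤ ccm * c0⁻¹ * (b / a) ^ γ :=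
          mul_nonneg (mul_nonneg hccm0.le (inv_nonneg.2 hc0.le)) hbr.le
        calc gfun G z0 C1 Ayz ≤ ccm * gfun G z0 C1 (A (Qb y) b) := hcm2
          _ = ccm * G (A (Qb y) b) z0 := by rw [hg2]
          _ ≤ ccm * (c0⁻¹ * (b / a) ^ γ * G (A (Qb y) a) z0) :=
              mul_le_mul_of_nonneg_left hG2le hccm0.le
          _ = ccm * c0⁻¹ * (b / a) ^ γ * gfun G z0 C1 (A (Qb y) a) := by rw [hg1]; ring
          _ ≤ ccm * c0⁻¹ * (b / a) ^ γ * (ccm * gfun G z0 C1 Axy) :=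
              mul_le_mul_of_nonneg_left hcm1 hnn
          _ = (ccm ^ 2 * c0⁻¹) * ((b / a) ^ γ * gfun G z0 C1 Axy) := by ring
          _ ≤ c * (mx * gfun G z0 C1 Axy) :=
              mul_le_mul hcB (mul_le_mul_of_nonneg_right hmxge hgX.le)
                (mul_nonneg hbr.le hgX.le) hcpos.le
          _ = c * mx * gfun G z0 C1 Axy := (mul_assoc _ _ _).symm
    · -- b ≥ ε1 : Ayz = z0
      have hYz : Ayz = z0 := by
        unfold BB at hAyz
        rw [if_neg (hb ▸ hbε)] at hAyz
        rwa [mem_singleton_iff] at hAyz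
      have hgYz : gfun G z0 C1 Ayz = C1 := by
        rw [hYz]; unfold gfun; rw [if_pos rfl]
      have haγ : 0 < a ^ γ := Real.rpow_pos_of_pos ha0 γ
      have h1 : ε1 ^ γ / a ^ γ ≤ mx := by
        have h2 : ε1 / a ≤ b / a := by gcongr; exact not_lt.1 hbε
        have h3 : (ε1 / a) ^ γ ≤ (b / a) ^ γ :=
          Real.rpow_le_rpow (div_pos hε1pos ha0).le h2 hγ0.le
        rw [Real.div_rpow hε1pos.le ha0.le] at h3
        exact h3.trans hmxge
      have s1 : clw * a ^ γ / ccm ≤ gfun G z0 C1 Axy := by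
        rw [div_le_iff₀ hccm0]
        linarith
      have s2 : (ε1 ^ γ / a ^ γ) * (clw * a ^ γ / ccm) ≤ mx * gfun G z0 C1 Axy :=
        mul_le_mul h1 s1 (div_nonneg (mul_nonneg hclw.le haγ.le) hccm0.le) hmx0
      have hkey : C1 = (C1 * ccm / (clw * ε1 ^ γ)) * ((ε1 ^ γ / a ^ γ) * (clw * a ^ γ / ccm)) := by
        field_simp
      calc gfun G z0 C1 Ayz = C1 := hgYz
        _ = (C1 * ccm / (clw * ε1 ^ γ)) * ((ε1 ^ γ / a ^ γ) * (clw * a ^ γ / ccm)) := hkey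
        _ ≤ (C1 * ccm / (clw * ε1 ^ γ)) * (mx * gfun G z0 C1 Axy) :=
            mul_le_mul_of_nonneg_left s2 hterm3.le
        _ ≤ c * (mx * gfun G z0 C1 Axy) :=
            mul_le_mul_of_nonneg_right hcC (mul_nonneg hmx0 hgX.le)
        _ = c * mx * gfun G z0 C1 Axy := (mul_assoc _ _ _).symm
  · -- a ≥ ε1 : Axy = z0
    have hXz : Axy = z0 := by
      unfold BB at hAxy
      rw [if_neg (ha ▸ haε)] at hAxy
      rwa [mem_singleton_iff] at hAxy
    have hgXz : gfun G z0 C1 Axy = C1 := by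
      rw [hXz]; unfold gfun; rw [if_pos rfl]
    rw [hgXz]
    have h1 : (1:ℝ) ≤ c * mx := by
      calc (1:ℝ) = 1 * 1 := by norm_num
        _ ≤ c * mx := mul_le_mul hc1le hmx1 zero_le_one hcpos.le
    calc gfun G z0 C1 Ayz ≤ C1 := hgle Ayz
      _ = 1 * C1 := (one_mul _).symm
      _ ≤ c * mx * C1 := mul_le_mul_of_nonneg_right h1 hC1pos.le
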